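/- arXiv:2507.18805 — 2 statements merged into one kernel-verified Lean document; each statement's English description precedes it below -/
import Mathlib

section
/- Let E be a closed non-empty set in ℝⁿ with |E| = 0, and Q₀ a cube intersecting E. For every t ∈ (0,1), the set 𝓛(t,Q₀,E) = {L ≥ 0 : Σ_{Q ∈ D_E(Q₀), l(Q) ≥ L} |Q| ≥ t|Q₀|} is a closed interval [0, L_t] with 0 < L_t ≤ l(𝓜(Q₀)), where 𝓜(Q₀) is a dyadic subcube of maximal side length in D_E(Q₀). In particular the supremum L_t is attained and is a dyadic fraction 2^{-k₀} l(Q₀) for some integer k₀ ≥ 1. -/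
open MeasureTheory Set
open scoped Classical

/-- A half-open axis-parallel cube in `ℝⁿ`. -/
structure Cube (n : ℕ) where
  a : Fin n → ℝ
  l : ℝ
  l_pos : 0 < l

namespace Cube

/-- The set of points of the cube. -/
def carrier {n : ℕ} (Q : Cube n) : Set (Fin n → ℝ) :=
  {x | ∀ i, Q.a i ≤ x i ∧ x i < Q.a i + Q.l}

/-- The volume (Lebesgue measure) of the cube. -/
def vol {n : ℕ} (Q : Cube n) : ℝ := Q.l ^ n

end Cube

/-- `Q` is a dyadic subcube of `Q₀` of generation `j`. -/
def IsDyadic {n : ℕ} (Q₀ Q : Cube n) (j : ℕ) : Prop :=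
  Q.l = Q₀.l / 2 ^ j ∧
    ∃ k : Fin n → ℕ, (∀ i, k i < 2 ^ j) ∧ ∀ i, Q.a i = Q₀.a i + (k i : ℝ) * Q₀.l / 2 ^ j

/-- The dyadic system of subcubes of `Q₀`. -/
def dyadicFamily {n : ℕ} (Q₀ : Cube n) : Set (Cube n) := {Q | ∃ j, IsDyadic Q₀ Q j}

/-- `P` is the dyadic parent of `Q` inside the dyadic system of `Q₀`. -/
def IsParent {n : ℕ} (Q₀ P Q : Cube n) : Prop :=
  ∃ j : ℕ, IsDyadic Q₀ Q (j + 1) ∧ IsDyadic Q₀ P j ∧ Q.carrier ⊆ P.carrier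

/-- The family `D_E(Q₀)` of maximal dyadic subcubes of `Q₀` avoiding `E` whose dyadic
parent meets `E`. -/
def DE {n : ℕ} (E : Set (Fin n → ℝ)) (Q₀ : Cube n) : Set (Cube n) :=
  {Q | Q ∈ dyadicFamily Q₀ ∧ Q.carrier ∩ E = ∅ ∧
    ∀ P : Cube n, IsParent Q₀ P Q → (P.carrier ∩ E).Nonempty}

/-- `Σ_{Q ∈ D_E(Q₀), l(Q) ≥ L} |Q|`. -/
noncomputable def sumGE {n : ℕ} (E : Set (Fin n → ℝ)) (Q₀ : Cube n) (L : ℝ) : ℝ :=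
  ∑' Q : {Q : Cube n // Q ∈ DE E Q₀ ∧ L ≤ Q.l}, (Q : Cube n).vol

/-- `Σ_{Q ∈ D_E(Q₀), l(Q) ≤ L} |Q|`. -/
noncomputable def sumLE {n : ℕ} (E : Set (Fin n → ℝ)) (Q₀ : Cube n) (L : ℝ) : ℝ :=
  ∑' Q : {Q : Cube n // Q ∈ DE E Q₀ ∧ Q.l ≤ L}, (Q : Cube n).vol

/-- `Σ_{Q ∈ D_E(Q₀), l(Q) < L} |Q|`. -/
noncomputable def sumLT {n : ℕ} (E : Set (Fin n → ℝ)) (Q₀ : Cube n) (L : ℝ) : ℝ :=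
  ∑' Q : {Q : Cube n // Q ∈ DE E Q₀ ∧ Q.l < L}, (Q : Cube n).vol

/-- `Σ_{Q ∈ D_E(Q₀), l(Q) > L} |Q|`. -/
noncomputable def sumGT {n : ℕ} (E : Set (Fin n → ℝ)) (Q₀ : Cube n) (L : ℝ) : ℝ :=
  ∑' Q : {Q : Cube n // Q ∈ DE E Q₀ ∧ L < Q.l}, (Q : Cube n).vol

/-- The set `𝓛(t,Q₀,E)`. -/
def Lset {n : ℕ} (t : ℝ) (Q₀ : Cube n) (E : Set (Fin n → ℝ)) : Set ℝ :=
  {L | 0 ≤ L ∧ t * Q₀.vol ≤ sumGE E Q₀ L}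

/-- The set `𝓢(t,Q₀,E)`. -/
def Sset {n : ℕ} (t : ℝ) (Q₀ : Cube n) (E : Set (Fin n → ℝ)) : Set ℝ :=
  {L | 0 ≤ L ∧ t * Q₀.vol ≤ sumLE E Q₀ L}

/-- `𝓛_{Q₀}(t) = sup 𝓛(t,Q₀,E)` (the max, when attained). -/
noncomputable def Lfun {n : ℕ} (E : Set (Fin n → ℝ)) (Q₀ : Cube n) (t : ℝ) : ℝ :=
  sSup (Lset t Q₀ E)

/-- `𝓢_{Q₀}(t) = inf 𝓢(t,Q₀,E)` (the min, when attained). -/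
noncomputable def Sfun {n : ℕ} (E : Set (Fin n → ℝ)) (Q₀ : Cube n) (t : ℝ) : ℝ :=
  sInf (Sset t Q₀ E)

/-- The Muckenhoupt class `A_p` (for `p = 1` the `A₁` condition, for `p > 1` the usual
`A_p` condition), with cubes as the testing family. -/
def IsAp {n : ℕ} (p : ℝ) (w : (Fin n → ℝ) → ℝ) : Prop :=
  (∀ᵐ x, 0 < w x) ∧ LocallyIntegrable w volume ∧
    ∃ C : ℝ, 0 < C ∧ ∀ Q : Cube n,
      if p = 1 then
        (∫ x in Q.carrier, w x) / Q.vol ≤ C * essInf w (volume.restrict Q.carrier)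
      else
        ((∫ x in Q.carrier, w x) / Q.vol) *
          ((∫ x in Q.carrier, w x ^ (-1 / (p - 1))) / Q.vol) ^ (p - 1) ≤ C


namespace Aux
variable {n : ℕ}

lemma Cube.ext' {Q Q' : Cube n} (ha : Q.a = Q'.a) (hl : Q.l = Q'.l) : Q = Q' := by
  cases Q; cases Q'; simp_all

lemma carrier_congr {Q Q' : Cube n} (ha : Q.a = Q'.a) (hl : Q.l = Q'.l) :
    Q.carrier = Q'.carrier := by rw [Cube.ext' ha hl]

lemma volume_carrier (Q : Cube n) : volume Q.carrier = ENNReal.ofReal Q.vol := by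
  have : Q.carrier = Set.univ.pi (fun i => Set.Ico (Q.a i) (Q.a i + Q.l)) := by
    ext x; simp [Cube.carrier, Set.mem_pi]
  rw [this, volume_pi_pi]
  simp [Real.volume_Ico, Cube.vol, ← ENNReal.ofReal_pow Q.l_pos.le]

lemma measurable_carrier (Q : Cube n) : MeasurableSet Q.carrier := by
  have : Q.carrier = Set.univ.pi (fun i => Set.Ico (Q.a i) (Q.a i + Q.l)) := by
    ext x; simp [Cube.carrier, Set.mem_pi]
  rw [this]
  exact MeasurableSet.univ_pi fun i => measurableSet_Ico

lemma vol_pos (Q : Cube n) : 0 < Q.vol := pow_pos Q.l_pos n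

lemma isDyadic_self (Q₀ : Cube n) : IsDyadic Q₀ Q₀ 0 :=
  ⟨by simp, 0, by simp, by simp⟩

lemma isDyadic_zero {Q₀ Q : Cube n} (h : IsDyadic Q₀ Q 0) : Q = Q₀ := by
  obtain ⟨hl, k, hk, ha⟩ := h
  refine Cube.ext' (funext fun i => ?_) (by simpa using hl)
  have : k i = 0 := Nat.lt_one_iff.mp (by simpa using hk i)
  simpa [this] using ha i

lemma gen_unique {Q₀ Q : Cube n} {j j' : ℕ} (h : IsDyadic Q₀ Q j) (h' : IsDyadic Q₀ Q j') :
    j = j' := by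
  have h2 : (Q₀.l : ℝ) / 2 ^ j = Q₀.l / 2 ^ j' := h.1 ▸ h'.1
  field_simp at h2
  have h3 := mul_left_cancel₀ Q₀.l_pos.ne' h2
  have h4 := pow_right_injective₀ (by norm_num : (0:ℝ) < 2) (by norm_num) h3
  omega

lemma carrier_subset {Q₀ Q : Cube n} {j : ℕ} (h : IsDyadic Q₀ Q j) :
    Q.carrier ⊆ Q₀.carrier := by
  obtain ⟨hl, k, hk, ha⟩ := h
  intro x hx i
  have h1 := (hx i).1
  have h2 := (hx i).2
  rw [ha i] at h1
  rw [ha i, hl] at h2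
  have hδ : (0:ℝ) < Q₀.l / 2 ^ j := div_pos Q₀.l_pos (by positivity)
  constructor
  · have hr : (k i : ℝ) * Q₀.l / 2 ^ j = (k i : ℝ) * (Q₀.l / 2 ^ j) := by ring
    have hnn := mul_nonneg (by positivity : (0:ℝ) ≤ (k i : ℝ)) hδ.le
    linarith
  · have hk' : ((k i : ℝ) + 1) ≤ 2 ^ j := by exact_mod_cast hk i
    have : x i < Q₀.a i + ((k i : ℝ) + 1) * (Q₀.l / 2 ^ j) := by
      have : (k i : ℝ) * Q₀.l / 2 ^ j = (k i : ℝ) * (Q₀.l / 2 ^ j) := by ring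
      nlinarith [h2]
    have h2j : (2:ℝ) ^ j * (Q₀.l / 2 ^ j) = Q₀.l := by field_simp
    linarith [this, mul_le_mul_of_nonneg_right hk' hδ.le, h2j]

variable {n : ℕ}

lemma nat_bounds {u δ : ℝ} (hδ : 0 < δ) {p q m : ℕ}
    (h1 : (p:ℝ) * (2^m * δ) ≤ u) (h2 : u < (p:ℝ) * (2^m * δ) + 2^m * δ)
    (h3 : (q:ℝ) * δ ≤ u) (h4 : u < (q:ℝ) * δ + δ) :
    p * 2^m ≤ q ∧ q + 1 ≤ (p+1) * 2^m := by
  constructor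
  · have hA : ((p:ℝ) * 2^m) * δ < ((q:ℝ)+1) * δ := by nlinarith
    have hB : (p:ℝ) * 2^m < (q:ℝ)+1 := lt_of_mul_lt_mul_right hA hδ.le
    have hC : ((p * 2^m : ℕ) : ℝ) < ((q+1 : ℕ):ℝ) := by push_cast; linarith
    exact Nat.lt_succ_iff.mp (by exact_mod_cast hC)
  · have hA : ((q:ℝ)) * δ < (((p:ℝ)+1) * 2^m) * δ := by nlinarith
    have hB : (q:ℝ) < ((p:ℝ)+1)*2^m := lt_of_mul_lt_mul_right hA hδ.le
    have hC : ((q:ℕ):ℝ) < (((p+1) * 2^m : ℕ):ℝ) := by push_cast; linarith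
    exact Nat.succ_le_of_lt (by exact_mod_cast hC)

lemma dyadic_nested {Q₀ Q Q' : Cube n} {j j' : ℕ} (hj : j ≤ j')
    (hQ : IsDyadic Q₀ Q j) (hQ' : IsDyadic Q₀ Q' j')
    {x : Fin n → ℝ} (hx : x ∈ Q.carrier) (hx' : x ∈ Q'.carrier) :
    Q'.carrier ⊆ Q.carrier := by
  obtain ⟨hl, k, hk, ha⟩ := hQ
  obtain ⟨hl', k', hk', ha'⟩ := hQ'
  obtain ⟨m, hjm⟩ : ∃ m, j + m = j' := ⟨j' - j, by omega⟩
  have hδ : (0:ℝ) < Q₀.l / 2 ^ j' := div_pos Q₀.l_pos (by positivity)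
  have key : Q₀.l / 2 ^ j = 2 ^ m * (Q₀.l / 2 ^ j') := by
    rw [← hjm, pow_add]; field_simp
  intro y hy i
  have ax1 : Q₀.a i + (k i : ℝ) * (2 ^ m * (Q₀.l / 2 ^ j')) ≤ x i := by
    have h := (hx i).1; rw [ha i, mul_div_assoc, key] at h; exact h
  have ax2 : x i < Q₀.a i + (k i : ℝ) * (2 ^ m * (Q₀.l / 2 ^ j')) + 2 ^ m * (Q₀.l / 2 ^ j') := by
    have h := (hx i).2; rw [ha i, hl, mul_div_assoc, key] at h; exact h
  have bx1 : Q₀.a i + (k' i : ℝ) * (Q₀.l / 2 ^ j') ≤ x i := by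
    have h := (hx' i).1; rw [ha' i, mul_div_assoc] at h; exact h
  have bx2 : x i < Q₀.a i + (k' i : ℝ) * (Q₀.l / 2 ^ j') + (Q₀.l / 2 ^ j') := by
    have h := (hx' i).2; rw [ha' i, hl', mul_div_assoc] at h; exact h
  obtain ⟨hn1, hn2⟩ := nat_bounds (u := x i - Q₀.a i) hδ (p := k i) (q := k' i) (m := m)
    (by linarith) (by linarith) (by linarith) (by linarith)
  have c1 : (k i:ℝ) * 2^m ≤ (k' i:ℝ) := by exact_mod_cast hn1
  have c2 : (k' i:ℝ) + 1 ≤ ((k i:ℝ)+1) * 2^m := by exact_mod_cast hn2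
  have yb1 : Q₀.a i + (k' i : ℝ) * (Q₀.l / 2 ^ j') ≤ y i := by
    have h := (hy i).1; rw [ha' i, mul_div_assoc] at h; exact h
  have yb2 : y i < Q₀.a i + (k' i : ℝ) * (Q₀.l / 2 ^ j') + (Q₀.l / 2 ^ j') := by
    have h := (hy i).2; rw [ha' i, hl', mul_div_assoc] at h; exact h
  rw [ha i, hl, mul_div_assoc, key]
  constructor
  · nlinarith [mul_le_mul_of_nonneg_right c1 hδ.le]
  · nlinarith [mul_le_mul_of_nonneg_right c2 hδ.le]

variable {n : ℕ}

lemma exists_dyadic_mem (Q₀ : Cube n) (j : ℕ) {x : Fin n → ℝ} (hx : x ∈ Q₀.carrier) :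
    ∃ Q : Cube n, IsDyadic Q₀ Q j ∧ x ∈ Q.carrier := by
  have hδ : (0:ℝ) < Q₀.l / 2 ^ j := div_pos Q₀.l_pos (by positivity)
  have h2j : (2:ℝ) ^ j * (Q₀.l / 2 ^ j) = Q₀.l := by field_simp
  set u : Fin n → ℝ := fun i => (x i - Q₀.a i) / (Q₀.l / 2 ^ j) with hu
  have hun : ∀ i, (0:ℝ) ≤ u i := fun i => div_nonneg (by linarith [(hx i).1]) hδ.le
  have hub : ∀ i, u i < 2 ^ j := by
    intro i
    rw [hu, div_lt_iff₀ hδ]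
    have := (hx i).2
    linarith [h2j]
  set f : Fin n → ℕ := fun i => (⌊u i⌋).toNat with hf
  have hfc : ∀ i, ((f i : ℕ) : ℝ) = ((⌊u i⌋ : ℤ) : ℝ) := by
    intro i
    have h0 : ((⌊u i⌋).toNat : ℤ) = ⌊u i⌋ := Int.toNat_of_nonneg (Int.floor_nonneg.mpr (hun i))
    rw [hf]
    exact_mod_cast congrArg (fun z : ℤ => (z : ℝ)) h0
  have hflt : ∀ i, f i < 2 ^ j := by
    intro i
    have h1 : ((f i : ℕ) : ℝ) < 2 ^ j := by
      rw [hfc i]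
      exact lt_of_le_of_lt (Int.floor_le (u i)) (hub i)
    exact_mod_cast h1
  refine ⟨⟨fun i => Q₀.a i + (f i : ℝ) * Q₀.l / 2 ^ j, Q₀.l / 2 ^ j, hδ⟩,
    ⟨rfl, f, hflt, fun i => rfl⟩, ?_⟩
  intro i
  have hfl : ((f i : ℕ) : ℝ) ≤ u i := by rw [hfc i]; exact Int.floor_le (u i)
  have hfu : u i < (f i : ℝ) + 1 := by rw [hfc i]; exact Int.lt_floor_add_one (u i)
  have he : u i * (Q₀.l / 2 ^ j) = x i - Q₀.a i := div_mul_cancel₀ _ hδ.ne'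
  have hee : (f i : ℝ) * Q₀.l / 2 ^ j = (f i : ℝ) * (Q₀.l / 2 ^ j) := mul_div_assoc _ _ _
  constructor
  · show Q₀.a i + (f i : ℝ) * Q₀.l / 2 ^ j ≤ x i
    have := mul_le_mul_of_nonneg_right hfl hδ.le
    rw [he] at this
    linarith [hee]
  · show x i < Q₀.a i + (f i : ℝ) * Q₀.l / 2 ^ j + Q₀.l / 2 ^ j
    have := mul_lt_mul_of_pos_right hfu hδ
    rw [he] at this
    linarith [hee]

variable {n : ℕ} {E : Set (Fin n → ℝ)} {Q₀ : Cube n}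

/-- Every cube of `D_E(Q₀)` has generation `≥ 1`. -/
lemma DE_gen (hQ₀ : (Q₀.carrier ∩ E).Nonempty) {Q : Cube n} (hQ : Q ∈ DE E Q₀) :
    ∃ j, 1 ≤ j ∧ IsDyadic Q₀ Q j := by
  obtain ⟨⟨j, hj⟩, hQE, _⟩ := hQ
  refine ⟨j, ?_, hj⟩
  by_contra h
  have hj0 : j = 0 := by omega
  subst hj0
  rw [isDyadic_zero hj] at hQE
  exact hQ₀.ne_empty hQE

lemma DE_l (hQ₀ : (Q₀.carrier ∩ E).Nonempty) {Q : Cube n} (hQ : Q ∈ DE E Q₀) :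
    ∃ j, 1 ≤ j ∧ Q.l = Q₀.l / 2 ^ j := by
  obtain ⟨j, hj1, hj⟩ := DE_gen hQ₀ hQ
  exact ⟨j, hj1, hj.1⟩

/-- Distinct cubes of `D_E(Q₀)` are disjoint. -/
lemma DE_disjoint {Q Q' : Cube n} (hQ : Q ∈ DE E Q₀) (hQ' : Q' ∈ DE E Q₀)
    {x : Fin n → ℝ} (hx : x ∈ Q.carrier) (hx' : x ∈ Q'.carrier) : Q = Q' := by
  obtain ⟨⟨j, hj⟩, hQE, hQP⟩ := hQ
  obtain ⟨⟨j', hj'⟩, hQE', hQP'⟩ := hQ'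
  rcases lt_trichotomy j j' with h | h | h
  · -- Q' strictly smaller: contradiction with maximality of Q'
    exfalso
    obtain ⟨P, hP, hxP⟩ := exists_dyadic_mem Q₀ (j' - 1) (carrier_subset hj hx)
    have hsub : Q'.carrier ⊆ P.carrier := dyadic_nested (by omega) hP hj' hxP hx'
    have hPE : (P.carrier ∩ E).Nonempty := hQP' P ⟨j' - 1, by rwa [Nat.sub_add_cancel (by omega)], hP, hsub⟩
    have hPQ : P.carrier ⊆ Q.carrier := dyadic_nested (by omega) hj hP hx hxP
    obtain ⟨z, hz1, hz2⟩ := hPE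
    exact absurd hQE (Set.nonempty_iff_ne_empty.mp ⟨z, hPQ hz1, hz2⟩)
  · -- same generation
    subst h
    have h1 : Q'.carrier ⊆ Q.carrier := dyadic_nested le_rfl hj hj' hx hx'
    have h2 : Q.carrier ⊆ Q'.carrier := dyadic_nested le_rfl hj' hj hx' hx
    -- derive equality of cubes
    have hcar : Q.carrier = Q'.carrier := le_antisymm h2 h1
    have hl : Q.l = Q'.l := by rw [hj.1, hj'.1]
    refine Cube.ext' (funext fun i => ?_) hl
    -- a's are the coordinate minima
    have haQ : Q.a ∈ Q.carrier := fun i => ⟨le_rfl, by linarith [Q.l_pos]⟩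
    have haQ' : Q'.a ∈ Q'.carrier := fun i => ⟨le_rfl, by linarith [Q'.l_pos]⟩
    have e1 := (h2 haQ i).1
    have e2 := (h1 haQ' i).1
    linarith
  · exfalso
    obtain ⟨P, hP, hxP⟩ := exists_dyadic_mem Q₀ (j - 1) (carrier_subset hj' hx')
    have hsub : Q.carrier ⊆ P.carrier := dyadic_nested (by omega) hP hj hxP hx
    have hPE : (P.carrier ∩ E).Nonempty := hQP P ⟨j - 1, by rwa [Nat.sub_add_cancel (by omega)], hP, hsub⟩
    have hPQ : P.carrier ⊆ Q'.carrier := dyadic_nested (by omega) hj' hP hx' hxP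
    obtain ⟨z, hz1, hz2⟩ := hPE
    exact absurd hQE' (Set.nonempty_iff_ne_empty.mp ⟨z, hPQ hz1, hz2⟩)

lemma DE_countable (E : Set (Fin n → ℝ)) (Q₀ : Cube n) : (DE E Q₀).Countable := by
  have h1 : (dyadicFamily Q₀).Countable := by
    have : dyadicFamily Q₀ ⊆ ⋃ j : ℕ, (fun k : Fin n → ℕ =>
        (⟨fun i => Q₀.a i + (k i : ℝ) * Q₀.l / 2 ^ j, Q₀.l / 2 ^ j,
          div_pos Q₀.l_pos (by positivity)⟩ : Cube n)) '' Set.univ := by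
      rintro Q ⟨j, hl, k, hk, ha⟩
      refine Set.mem_iUnion.mpr ⟨j, ⟨k, Set.mem_univ _, ?_⟩⟩
      exact (Cube.ext' (funext fun i => (ha i)) hl).symm
    exact Set.Countable.mono this
      (Set.countable_iUnion fun j => Set.Countable.image (Set.countable_univ) _)
  exact h1.mono (fun Q hQ => hQ.1)

variable {n : ℕ} {E : Set (Fin n → ℝ)} {Q₀ : Cube n}

lemma DE_cover (hE : IsClosed E) (hQ₀ : (Q₀.carrier ∩ E).Nonempty)
    {x : Fin n → ℝ} (hx : x ∈ Q₀.carrier) (hxE : x ∉ E) :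
    ∃ Q ∈ DE E Q₀, x ∈ Q.carrier := by
  -- there is j with the dyadic cube at x of generation j avoiding E
  have hex : ∃ j : ℕ, ∃ Q : Cube n, IsDyadic Q₀ Q j ∧ x ∈ Q.carrier ∧ Q.carrier ∩ E = ∅ := by
    obtain ⟨ε, hε, hball⟩ := Metric.isOpen_iff.mp hE.isOpen_compl x hxE
    obtain ⟨j, hj⟩ : ∃ j : ℕ, Q₀.l / 2 ^ j < ε := by
      obtain ⟨j, hj⟩ := pow_unbounded_of_one_lt (Q₀.l / ε) (by norm_num : (1:ℝ) < 2)
      exact ⟨j, by rw [div_lt_iff₀ (by positivity)]; rw [div_lt_iff₀ hε] at hj; linarith⟩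
    obtain ⟨Q, hQ, hxQ⟩ := exists_dyadic_mem Q₀ j hx
    refine ⟨j, Q, hQ, hxQ, ?_⟩
    rw [Set.eq_empty_iff_forall_notMem]
    rintro y ⟨hyQ, hyE⟩
    apply hball ?_ hyE
    rw [Metric.mem_ball]
    rw [dist_pi_lt_iff hε]
    intro i
    have h1 := hxQ i
    have h2 := hyQ i
    rw [Real.dist_eq, hQ.1] at *
    rw [abs_lt]
    constructor <;> [linarith [h1.1, h1.2, h2.1, h2.2, hj]; linarith [h1.1, h1.2, h2.1, h2.2, hj]]
  classical
  let j₀ := Nat.find hex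
  obtain ⟨Q, hQd, hxQ, hQE⟩ := Nat.find_spec hex
  have hj₀1 : 1 ≤ j₀ := by
    rcases Nat.eq_zero_or_pos j₀ with h0 | h0
    · exfalso
      have := Nat.find_spec hex
      rw [show Nat.find hex = j₀ from rfl, h0] at this
      obtain ⟨Q', hQ'd, _, hQ'E⟩ := this
      rw [isDyadic_zero hQ'd] at hQ'E
      exact hQ₀.ne_empty hQ'E
    · exact h0
  refine ⟨Q, ⟨⟨j₀, hQd⟩, hQE, ?_⟩, hxQ⟩
  rintro P ⟨j', hQ', hP, hsub⟩
  have hjj : j' + 1 = j₀ := gen_unique hQ' hQd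
  by_contra hPE
  rw [Set.not_nonempty_iff_eq_empty] at hPE
  exact Nat.find_min hex (m := j') (by omega) ⟨P, hP, hsub hxQ, hPE⟩

variable {n : ℕ} {E : Set (Fin n → ℝ)} {Q₀ : Cube n}

/-- the set of cubes in `D_E(Q₀)` with side at least `L`. -/
def SGE (E : Set (Fin n → ℝ)) (Q₀ : Cube n) (L : ℝ) : Set (Cube n) :=
  {Q | Q ∈ DE E Q₀ ∧ L ≤ Q.l}

lemma sumGE_eq (L : ℝ) :
    sumGE E Q₀ L = ∑' Q : Cube n, (SGE E Q₀ L).indicator Cube.vol Q :=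
  tsum_subtype _ _

lemma SGE_zero : SGE E Q₀ 0 = DE E Q₀ := by
  ext Q; exact ⟨fun h => h.1, fun h => ⟨h, Q.l_pos.le⟩⟩

lemma SGE_subset (L : ℝ) : SGE E Q₀ L ⊆ DE E Q₀ := fun _ h => h.1

lemma SGE_mono {L L' : ℝ} (h : L ≤ L') : SGE E Q₀ L' ⊆ SGE E Q₀ L :=
  fun _ hQ => ⟨hQ.1, le_trans h hQ.2⟩

lemma pairwise_disjoint_DE :
    (DE E Q₀).PairwiseDisjoint Cube.carrier := by
  intro Q hQ Q' hQ' hne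
  rw [Function.onFun, Set.disjoint_left]
  intro x hx hx'
  exact hne (DE_disjoint hQ hQ' hx hx')

lemma volume_union_DE (hE : IsClosed E) (hQ₀ : (Q₀.carrier ∩ E).Nonempty)
    (hE0 : volume E = 0) :
    volume (⋃ Q ∈ DE E Q₀, Q.carrier) = ENNReal.ofReal Q₀.vol := by
  have h1 : volume (⋃ Q ∈ DE E Q₀, Q.carrier) ≤ volume Q₀.carrier := by
    apply measure_mono
    refine Set.iUnion₂_subset fun Q hQ => ?_
    obtain ⟨j, hj⟩ := hQ.1
    exact carrier_subset hj
  have h2 : volume Q₀.carrier ≤ volume (⋃ Q ∈ DE E Q₀, Q.carrier) := by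
    calc volume Q₀.carrier ≤ volume ((⋃ Q ∈ DE E Q₀, Q.carrier) ∪ E) := by
          apply measure_mono
          intro x hx
          by_cases hxE : x ∈ E
          · exact Or.inr hxE
          · obtain ⟨Q, hQ, hxQ⟩ := DE_cover hE hQ₀ hx hxE
            exact Or.inl (Set.mem_biUnion hQ hxQ)
      _ ≤ volume (⋃ Q ∈ DE E Q₀, Q.carrier) + volume E := measure_union_le _ _
      _ = volume (⋃ Q ∈ DE E Q₀, Q.carrier) := by rw [hE0, add_zero]
  rw [le_antisymm h1 h2, volume_carrier]

lemma tsum_volume_DE (hE : IsClosed E) (hQ₀ : (Q₀.carrier ∩ E).Nonempty)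
    (hE0 : volume E = 0) :
    ∑' Q : (DE E Q₀), volume ((Q : Cube n).carrier) = ENNReal.ofReal Q₀.vol := by
  rw [← measure_biUnion (DE_countable E Q₀) (pairwise_disjoint_DE)
    (fun Q _ => measurable_carrier Q)]
  exact volume_union_DE hE hQ₀ hE0

lemma summable_DE (hE : IsClosed E) (hQ₀ : (Q₀.carrier ∩ E).Nonempty)
    (hE0 : volume E = 0) :
    Summable (fun Q : (DE E Q₀) => (Q : Cube n).vol) := by
  have h := ENNReal.summable_toReal (by
    rw [tsum_volume_DE hE hQ₀ hE0]; exact ENNReal.ofReal_ne_top)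
  convert h using 2 with Q
  rw [volume_carrier, ENNReal.toReal_ofReal (vol_pos _).le]

lemma summable_ind_DE (hE : IsClosed E) (hQ₀ : (Q₀.carrier ∩ E).Nonempty)
    (hE0 : volume E = 0) : Summable ((DE E Q₀).indicator Cube.vol) :=
  summable_subtype_iff_indicator.mp (summable_DE hE hQ₀ hE0)

lemma summable_SGE (hE : IsClosed E) (hQ₀ : (Q₀.carrier ∩ E).Nonempty)
    (hE0 : volume E = 0) (L : ℝ) : Summable ((SGE E Q₀ L).indicator Cube.vol) := by
  have h := (summable_ind_DE hE hQ₀ hE0).indicator (SGE E Q₀ L)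
  rwa [Set.indicator_indicator, Set.inter_eq_self_of_subset_left (SGE_subset L)] at h

lemma sumGE_anti (hE : IsClosed E) (hQ₀ : (Q₀.carrier ∩ E).Nonempty)
    (hE0 : volume E = 0) {L L' : ℝ} (h : L ≤ L') : sumGE E Q₀ L' ≤ sumGE E Q₀ L := by
  rw [sumGE_eq, sumGE_eq]
  exact Summable.tsum_le_tsum
    (fun Q => Set.indicator_le_indicator_of_subset (SGE_mono h) (fun Q => (vol_pos Q).le) Q)
    (summable_SGE hE hQ₀ hE0 L') (summable_SGE hE hQ₀ hE0 L)

lemma sumGE_zero (hE : IsClosed E) (hQ₀ : (Q₀.carrier ∩ E).Nonempty)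
    (hE0 : volume E = 0) : sumGE E Q₀ 0 = Q₀.vol := by
  rw [sumGE_eq, SGE_zero, ← tsum_subtype]
  have h : ∀ Q : (DE E Q₀), (Q : Cube n).vol = (volume ((Q : Cube n).carrier)).toReal := by
    intro Q
    rw [volume_carrier, ENNReal.toReal_ofReal (vol_pos _).le]
  calc (∑' Q : (DE E Q₀), (Q : Cube n).vol)
      = ∑' Q : (DE E Q₀), (volume ((Q : Cube n).carrier)).toReal := tsum_congr h
    _ = (∑' Q : (DE E Q₀), volume ((Q : Cube n).carrier)).toReal := by
        rw [ENNReal.tsum_toReal_eq (fun Q => by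
          rw [volume_carrier]; exact ENNReal.ofReal_ne_top)]
    _ = Q₀.vol := by rw [tsum_volume_DE hE hQ₀ hE0, ENNReal.toReal_ofReal (vol_pos _).le]

lemma sumGE_nonneg (L : ℝ) : 0 ≤ sumGE E Q₀ L :=
  tsum_nonneg fun Q => (vol_pos _).le

variable {n : ℕ} {E : Set (Fin n → ℝ)} {Q₀ : Cube n}

lemma div_pow_anti {j k : ℕ} (h : k ≤ j) : Q₀.l / 2 ^ j ≤ Q₀.l / 2 ^ k := by
  gcongr
  · exact Q₀.l_pos.le
  · norm_num

lemma SGE_window (hQ₀ : (Q₀.carrier ∩ E).Nonempty) {k : ℕ} {L₁ L₂ : ℝ}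
    (h1 : Q₀.l / 2 ^ (k+1) < L₁) (h12 : L₁ ≤ L₂) (h2 : L₂ ≤ Q₀.l / 2 ^ k) :
    SGE E Q₀ L₁ = SGE E Q₀ L₂ := by
  ext Q
  refine ⟨fun h => ⟨h.1, ?_⟩, fun h => ⟨h.1, le_trans h12 h.2⟩⟩
  obtain ⟨hQ, hL⟩ := h
  obtain ⟨j, hj1, hjl⟩ := DE_l hQ₀ hQ
  have hjk : j ≤ k := by
    by_contra hcon
    have hle : Q₀.l / 2 ^ j ≤ Q₀.l / 2 ^ (k+1) := div_pow_anti (by omega)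
    rw [hjl] at hL
    linarith
  calc L₂ ≤ Q₀.l / 2 ^ k := h2
    _ ≤ Q₀.l / 2 ^ j := div_pow_anti hjk
    _ = Q.l := hjl.symm

lemma sumGE_of_gt_max {M : Cube n} (hMmax : ∀ Q ∈ DE E Q₀, Q.l ≤ M.l)
    {L : ℝ} (h : M.l < L) : sumGE E Q₀ L = 0 := by
  rw [sumGE_eq]
  have : SGE E Q₀ L = ∅ := by
    rw [Set.eq_empty_iff_forall_notMem]
    rintro Q ⟨hQ, hL⟩
    exact absurd (hMmax Q hQ) (by linarith)
  rw [this]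
  simp

lemma exists_pos_mem (hE : IsClosed E) (hQ₀ : (Q₀.carrier ∩ E).Nonempty)
    (hE0 : volume E = 0) {t : ℝ} (ht0 : 0 < t) (ht1 : t < 1) :
    ∃ L : ℝ, 0 < L ∧ t * Q₀.vol ≤ sumGE E Q₀ L := by
  have hvol : 0 < Q₀.vol := vol_pos Q₀
  have hlt : t * Q₀.vol < ∑' Q : (DE E Q₀), (Q : Cube n).vol := by
    have h0 : (∑' Q : (DE E Q₀), (Q : Cube n).vol) = sumGE E Q₀ 0 := by
      rw [sumGE_eq, SGE_zero, ← tsum_subtype]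
    rw [h0, sumGE_zero hE hQ₀ hE0]
    nlinarith
  have hS := (summable_DE hE hQ₀ hE0).hasSum
  obtain ⟨F, hF⟩ := (hS.eventually (eventually_gt_nhds hlt)).exists
  have hFne : F.Nonempty := by
    rcases F.eq_empty_or_nonempty with h | h
    · exfalso; rw [h] at hF; simp at hF; nlinarith
    · exact h
  set L : ℝ := F.inf' hFne (fun Q => (Q : Cube n).l) with hL
  have hLpos : 0 < L := by
    rw [hL, Finset.lt_inf'_iff]
    exact fun Q _ => (Q : Cube n).l_pos
  refine ⟨L, hLpos, ?_⟩
  have h1 : ∑ Q ∈ F, (Q : Cube n).vol = ∑ Q ∈ F.image (Subtype.val), Q.vol := by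
    rw [Finset.sum_image (fun a _ b _ h => Subtype.val_injective h)]
  have h2 : ∑ Q ∈ F.image (Subtype.val), Q.vol
      = ∑ Q ∈ F.image (Subtype.val), (SGE E Q₀ L).indicator Cube.vol Q := by
    apply Finset.sum_congr rfl
    intro Q hQmem
    obtain ⟨Q', hQ'F, rfl⟩ := Finset.mem_image.mp hQmem
    rw [Set.indicator_of_mem]
    exact ⟨Q'.2, Finset.inf'_le _ hQ'F⟩
  have h3 : ∑ Q ∈ F.image (Subtype.val), (SGE E Q₀ L).indicator Cube.vol Q
      ≤ sumGE E Q₀ L := by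
    rw [sumGE_eq]
    exact Summable.sum_le_tsum _ (fun Q _ => Set.indicator_nonneg (fun Q _ => (vol_pos Q).le) Q)
      (summable_SGE hE hQ₀ hE0 L)
  linarith [hF]

end Aux

open Aux in
/-- For `t ∈ (0,1)`, the set `𝓛(t,Q₀,E)` is a closed interval `[0, L_t]` with
`0 < L_t ≤ l(𝓜(Q₀))`, and `L_t = 2^{-k₀} l(Q₀)` for some `k₀ ≥ 1`. -/
theorem stmt5 {n : ℕ} (E : Set (Fin n → ℝ)) (hE : IsClosed E) (hne : E.Nonempty)
    (hE0 : volume E = 0) (Q₀ : Cube n) (hQ₀ : (Q₀.carrier ∩ E).Nonempty)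
    (t : ℝ) (ht : t ∈ Set.Ioo (0 : ℝ) 1)
    (M : Cube n) (hM : M ∈ DE E Q₀) (hMmax : ∀ Q ∈ DE E Q₀, Q.l ≤ M.l) :
    ∃ Lt : ℝ, 0 < Lt ∧ Lt ≤ M.l ∧ Lset t Q₀ E = Set.Icc 0 Lt ∧
      ∃ k₀ : ℕ, 1 ≤ k₀ ∧ Lt = Q₀.l / 2 ^ k₀ := by
  obtain ⟨ht0, ht1⟩ := ht
  have hvol : 0 < Q₀.vol := vol_pos Q₀
  obtain ⟨jM, hjM1, hjMl⟩ := DE_l hQ₀ hM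
  have hM2 : M.l ≤ Q₀.l / 2 := by
    rw [hjMl]
    calc Q₀.l / 2 ^ jM ≤ Q₀.l / 2 ^ 1 := div_pow_anti hjM1
      _ = Q₀.l / 2 := by norm_num
  obtain ⟨L₀, hL₀pos, hL₀⟩ := exists_pos_mem hE hQ₀ hE0 ht0 ht1
  have hmemL₀ : L₀ ∈ Lset t Q₀ E := ⟨hL₀pos.le, hL₀⟩
  have hbdd : ∀ L ∈ Lset t Q₀ E, L ≤ M.l := by
    intro L hL
    by_contra h
    push_neg at h
    have h0 : sumGE E Q₀ L = 0 := sumGE_of_gt_max hMmax h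
    have := hL.2
    rw [h0] at this
    nlinarith
  have hbddA : BddAbove (Lset t Q₀ E) := ⟨M.l, fun L hL => hbdd L hL⟩
  set Lt := sSup (Lset t Q₀ E) with hLt
  have hLtpos : 0 < Lt := lt_of_lt_of_le hL₀pos (le_csSup hbddA hmemL₀)
  have hLtM : Lt ≤ M.l := csSup_le ⟨L₀, hmemL₀⟩ hbdd
  have hexm : ∃ m : ℕ, Q₀.l / 2 ^ m < Lt := by
    obtain ⟨m, hm⟩ := pow_unbounded_of_one_lt (Q₀.l / Lt) (by norm_num : (1:ℝ) < 2)
    refine ⟨m, ?_⟩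
    rw [div_lt_iff₀ (by positivity)]
    rw [div_lt_iff₀ hLtpos] at hm
    linarith
  have hmlt : Q₀.l / 2 ^ (Nat.find hexm) < Lt := Nat.find_spec hexm
  have hm2 : 2 ≤ Nat.find hexm := by
    have hLt2 : Lt ≤ Q₀.l / 2 := le_trans hLtM hM2
    by_contra hcon
    push_neg at hcon
    interval_cases h : (Nat.find hexm)
    · norm_num at hmlt; linarith [Q₀.l_pos]
    · norm_num at hmlt; linarith
  set k := Nat.find hexm - 1 with hk
  have hk1 : 1 ≤ k := by omega
  have hkm : k + 1 = Nat.find hexm := by omega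
  have hwin1 : Q₀.l / 2 ^ (k+1) < Lt := by rw [hkm]; exact hmlt
  have hwin2 : Lt ≤ Q₀.l / 2 ^ k := by
    have h := Nat.find_min hexm (m := k) (by omega)
    push_neg at h
    exact h
  obtain ⟨L₁, hL₁mem, hL₁gt⟩ := exists_lt_of_lt_csSup ⟨L₀, hmemL₀⟩ hwin1
  have hL₁le : L₁ ≤ Lt := le_csSup hbddA hL₁mem
  have hset : SGE E Q₀ L₁ = SGE E Q₀ (Q₀.l / 2 ^ k) :=
    SGE_window hQ₀ hL₁gt (le_trans hL₁le hwin2) le_rfl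
  have hdy : (Q₀.l / 2 ^ k) ∈ Lset t Q₀ E := by
    refine ⟨(div_pos Q₀.l_pos (by positivity)).le, ?_⟩
    have : sumGE E Q₀ L₁ = sumGE E Q₀ (Q₀.l / 2 ^ k) := by
      rw [sumGE_eq, sumGE_eq, hset]
    rw [← this]
    exact hL₁mem.2
  have hLteq : Lt = Q₀.l / 2 ^ k := le_antisymm hwin2 (le_csSup hbddA hdy)
  have hLtmem : Lt ∈ Lset t Q₀ E := hLteq ▸ hdy
  refine ⟨Lt, hLtpos, hLtM, ?_, k, hk1, hLteq⟩
  ext L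
  constructor
  · intro hL
    exact ⟨hL.1, le_csSup hbddA hL⟩
  · rintro ⟨hL0, hLle⟩
    exact ⟨hL0, le_trans hLtmem.2 (sumGE_anti hE hQ₀ hE0 hLle)⟩
end

section
/- Let E be a closed non-empty set in ℝⁿ with |E| = 0, and Q₀ a cube intersecting E. For every t ∈ (0,1), the set 𝓢(t,Q₀,E) = {L ≥ 0 : Σ_{Q ∈ D_E(Q₀), l(Q) ≤ L} |Q| ≥ t|Q₀|} is a half-closed interval [L'_t, ∞) with 0 < L'_t ≤ l(𝓜(Q₀)); in particular its infimum is attained and equals 2^{-k₀} l(𝓜(Q₀)) for some integer k₀ ≥ 0. -/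
open MeasureTheory Set
open scoped Classical

lemma coord_key {c l₀ : ℝ} (hl : 0 < l₀) {j j' : ℕ} (hj : j ≤ j') (k k' : ℕ)
    {x : ℝ} (h1 : c + k * l₀ / 2 ^ j ≤ x) (h2 : x < c + k * l₀ / 2 ^ j + l₀ / 2 ^ j)
    (h1' : c + k' * l₀ / 2 ^ j' ≤ x) (h2' : x < c + k' * l₀ / 2 ^ j' + l₀ / 2 ^ j')
    {y : ℝ} (g1 : c + k' * l₀ / 2 ^ j' ≤ y) (g2 : y < c + k' * l₀ / 2 ^ j' + l₀ / 2 ^ j') :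
    c + k * l₀ / 2 ^ j ≤ y ∧ y < c + k * l₀ / 2 ^ j + l₀ / 2 ^ j := by
  have hu0 : (0:ℝ) < l₀ / 2 ^ j' := by positivity
  have hsplit : (2:ℝ) ^ j' = 2 ^ j * 2 ^ (j' - j) := by rw [← pow_add]; congr 1; omega
  have h2j : (0:ℝ) < 2 ^ j := by positivity
  have h2j' : (0:ℝ) < 2 ^ j' := by positivity
  have e2 : l₀ / 2 ^ j = ((2 ^ (j' - j) : ℕ) : ℝ) * (l₀ / 2 ^ j') := by
    push_cast; rw [hsplit]; field_simp
  have e1 : (k : ℝ) * l₀ / 2 ^ j = ((k * 2 ^ (j' - j) : ℕ) : ℝ) * (l₀ / 2 ^ j') := by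
    push_cast; rw [hsplit]; field_simp
  have e3 : (k' : ℝ) * l₀ / 2 ^ j' = (k' : ℝ) * (l₀ / 2 ^ j') := by ring
  set K : ℕ := k * 2 ^ (j' - j) with hK
  set M : ℕ := 2 ^ (j' - j) with hM
  set u : ℝ := l₀ / 2 ^ j' with hu
  simp only [e1, e2] at h1 h2 ⊢
  simp only [e3] at h1' h2' g1 g2
  have hKk' : (K : ℝ) ≤ (k' : ℝ) := by
    have : (K : ℝ) < (k' : ℝ) + 1 := by nlinarith
    have : K < k' + 1 := by exact_mod_cast (by push_cast; linarith : (K:ℝ) < ((k'+1:ℕ):ℝ))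
    exact_mod_cast Nat.lt_succ_iff.1 this
  have hk'K : (k' : ℝ) + 1 ≤ (K : ℝ) + (M : ℝ) := by
    have : (k' : ℝ) < (K : ℝ) + M := by nlinarith
    have hn : k' < K + M := by exact_mod_cast (by push_cast; linarith : (k':ℝ) < ((K+M:ℕ):ℝ))
    have : k' + 1 ≤ K + M := hn
    exact_mod_cast (by exact_mod_cast this : ((k'+1:ℕ):ℝ) ≤ ((K+M:ℕ):ℝ))
  constructor
  · nlinarith
  · nlinarith

section Stmt6Aux
variable {n : ℕ}

lemma cube_ext {Q Q' : Cube n} (ha : Q.a = Q'.a) (hl : Q.l = Q'.l) : Q = Q' := by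
  cases Q; cases Q'; simp_all

lemma carrier_nonempty (Q : Cube n) : Q.carrier.Nonempty :=
  ⟨Q.a, fun i => ⟨le_refl _, by linarith [Q.l_pos]⟩⟩

lemma dyadic_nested {Q₀ Q Q' : Cube n} {j j' : ℕ} (hj : j ≤ j')
    (hQ : IsDyadic Q₀ Q j) (hQ' : IsDyadic Q₀ Q' j')
    (hx : (Q.carrier ∩ Q'.carrier).Nonempty) : Q'.carrier ⊆ Q.carrier := by
  obtain ⟨hl, k, hk, ha⟩ := hQ
  obtain ⟨hl', k', hk', ha'⟩ := hQ'
  obtain ⟨x, hxQ, hxQ'⟩ := hx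
  intro y hy i
  have H := hxQ i; have H' := hxQ' i; have G := hy i
  rw [ha i, hl] at H ⊢
  rw [ha' i, hl'] at H' G
  exact coord_key Q₀.l_pos hj (k i) (k' i) H.1 H.2 H'.1 H'.2 G.1 G.2

lemma dyadic_same_gen_eq {Q₀ Q Q' : Cube n} {j : ℕ}
    (hQ : IsDyadic Q₀ Q j) (hQ' : IsDyadic Q₀ Q' j)
    (hx : (Q.carrier ∩ Q'.carrier).Nonempty) : Q = Q' := by
  have h1 : Q'.carrier ⊆ Q.carrier := dyadic_nested le_rfl hQ hQ' hx
  have h2 : Q.carrier ⊆ Q'.carrier := dyadic_nested le_rfl hQ' hQ (by rwa [Set.inter_comm] at hx)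
  have hl : Q.l = Q'.l := by rw [hQ.1, hQ'.1]
  apply cube_ext _ hl
  have ma : Q.a ∈ Q.carrier := fun i => ⟨le_rfl, lt_add_of_pos_right _ Q.l_pos⟩
  have ma' : Q'.a ∈ Q'.carrier := fun i => ⟨le_rfl, lt_add_of_pos_right _ Q'.l_pos⟩
  funext i
  exact le_antisymm ((h1 ma') i).1 ((h2 ma) i).1

end Stmt6Aux

section Stmt6Aux2
variable {n : ℕ}

lemma Q0_self_dyadic (Q₀ : Cube n) : IsDyadic Q₀ Q₀ 0 := by
  refine ⟨by norm_num, fun _ => 0, by norm_num, fun i => by norm_num⟩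

lemma dyadic_mem_a {Q₀ Q : Cube n} {j : ℕ} (hQ : IsDyadic Q₀ Q j) : Q.a ∈ Q₀.carrier := by
  obtain ⟨hl, k, hk, ha⟩ := hQ
  intro i
  have h2j : (0:ℝ) < 2 ^ j := by positivity
  have hkj : ((k i : ℝ)) < 2 ^ j := by exact_mod_cast hk i
  have hk0 : (0:ℝ) ≤ (k i : ℝ) := Nat.cast_nonneg _
  have hl0 := Q₀.l_pos
  constructor
  · rw [ha i]
    have : (0:ℝ) ≤ (k i : ℝ) * Q₀.l / 2 ^ j := by positivity
    linarith
  · rw [ha i]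
    have : (k i : ℝ) * Q₀.l / 2 ^ j < Q₀.l := by
      rw [div_lt_iff₀ h2j]; nlinarith
    linarith

lemma dyadic_sub {Q₀ Q : Cube n} {j : ℕ} (hQ : IsDyadic Q₀ Q j) :
    Q.carrier ⊆ Q₀.carrier := by
  apply dyadic_nested (Nat.zero_le j) (Q0_self_dyadic Q₀) hQ
  exact ⟨Q.a, dyadic_mem_a hQ, fun i => ⟨le_rfl, lt_add_of_pos_right _ Q.l_pos⟩⟩

lemma exists_parent {Q₀ Q : Cube n} {j : ℕ} (hQ : IsDyadic Q₀ Q (j+1)) :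
    ∃ P : Cube n, IsDyadic Q₀ P j ∧ Q.carrier ⊆ P.carrier := by
  obtain ⟨hl, k, hk, ha⟩ := hQ
  have hl0 := Q₀.l_pos
  refine ⟨⟨fun i => Q₀.a i + ((k i / 2 : ℕ) : ℝ) * Q₀.l / 2 ^ j, Q₀.l / 2 ^ j, by positivity⟩,
    ⟨rfl, fun i => k i / 2, fun i => ?_, fun i => rfl⟩, ?_⟩
  · have := hk i
    rw [pow_succ] at this
    simp only []
    omega
  · intro x hx i
    have H := hx i
    rw [ha i, hl] at H
    have hu0 : (0:ℝ) < Q₀.l / 2 ^ (j+1) := by positivity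
    have hdiv : (k i : ℝ) = 2 * ((k i / 2 : ℕ) : ℝ) + ((k i % 2 : ℕ) : ℝ) := by
      have : k i = 2 * (k i / 2) + k i % 2 := by omega
      exact_mod_cast congrArg (Nat.cast : ℕ → ℝ) this
    have hmod : ((k i % 2 : ℕ) : ℝ) ≤ 1 := by
      have : k i % 2 ≤ 1 := by omega
      exact_mod_cast this
    have hmod0 : (0:ℝ) ≤ ((k i % 2 : ℕ) : ℝ) := Nat.cast_nonneg _
    have hru : (0:ℝ) ≤ ((k i % 2 : ℕ) : ℝ) * (Q₀.l / 2 ^ (j+1)) := by positivity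
    have hru1 : ((k i % 2 : ℕ) : ℝ) * (Q₀.l / 2 ^ (j+1)) ≤ Q₀.l / 2 ^ (j+1) := by
      nlinarith
    have expand : (k i : ℝ) * Q₀.l / 2 ^ (j+1) =
        2 * (((k i / 2 : ℕ) : ℝ) * (Q₀.l / 2 ^ (j+1))) + ((k i % 2 : ℕ) : ℝ) * (Q₀.l / 2 ^ (j+1)) := by
      rw [hdiv]; ring
    have hcu : ((k i / 2 : ℕ) : ℝ) * Q₀.l / 2 ^ j = 2 * (((k i / 2 : ℕ) : ℝ) * (Q₀.l / 2 ^ (j+1))) := by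
      rw [pow_succ]; field_simp
    have hju : Q₀.l / 2 ^ j = 2 * (Q₀.l / 2 ^ (j+1)) := by
      rw [pow_succ]; field_simp
    have h1 := H.1
    have h2 := H.2
    rw [expand] at h1 h2
    constructor
    · show Q₀.a i + ((k i / 2 : ℕ) : ℝ) * Q₀.l / 2 ^ j ≤ x i
      rw [hcu]; linarith
    · show x i < Q₀.a i + ((k i / 2 : ℕ) : ℝ) * Q₀.l / 2 ^ j + Q₀.l / 2 ^ j
      rw [hcu, hju]; linarith

end Stmt6Aux2

section Stmt6Aux3
variable {n : ℕ}

lemma parent_of_dyadic {Q₀ Q : Cube n} {j : ℕ} (hQ : IsDyadic Q₀ Q (j+1)) :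
    ∃ P : Cube n, IsParent Q₀ P Q ∧ IsDyadic Q₀ P j := by
  obtain ⟨P, hP, hsub⟩ := exists_parent hQ
  exact ⟨P, ⟨j, hQ, hP, hsub⟩, hP⟩

lemma gen_eq {Q₀ Q : Cube n} {j j' : ℕ} (hQ : IsDyadic Q₀ Q j) (hQ' : IsDyadic Q₀ Q j') :
    j = j' := by
  have h := hQ.1.symm.trans hQ'.1
  have hl0 := Q₀.l_pos
  field_simp at h
  exact Nat.pow_right_injective le_rfl (by exact_mod_cast h.symm)

lemma DE_pairwiseDisjoint {E : Set (Fin n → ℝ)} {Q₀ : Cube n} :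
    (DE E Q₀).PairwiseDisjoint Cube.carrier := by
  -- helper: handles ordered generations
  have key : ∀ (Q Q' : Cube n), Q ∈ DE E Q₀ → Q' ∈ DE E Q₀ →
      ∀ j j', IsDyadic Q₀ Q j → IsDyadic Q₀ Q' j' → j ≤ j' →
      (Q.carrier ∩ Q'.carrier).Nonempty → Q = Q' := by
    intro Q Q' hQ hQ' j j' hd hd' hjj hne
    rcases Nat.eq_or_lt_of_le hjj with rfl | hlt
    · exact dyadic_same_gen_eq hd hd' hne
    · exfalso
      obtain ⟨m, rfl⟩ : ∃ m, j' = m + 1 := ⟨j' - 1, by omega⟩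
      obtain ⟨P, hPar, hPd⟩ := parent_of_dyadic hd'
      have hPQ : (Q.carrier ∩ P.carrier).Nonempty := by
        obtain ⟨x, hx1, hx2⟩ := hne
        exact ⟨x, hx1, hPar.choose_spec.2.2 hx2⟩
      have hsub : P.carrier ⊆ Q.carrier := dyadic_nested (by omega) hd hPd hPQ
      have hPE : (P.carrier ∩ E).Nonempty := hQ'.2.2 P hPar
      obtain ⟨z, hz1, hz2⟩ := hPE
      have : z ∈ Q.carrier ∩ E := ⟨hsub hz1, hz2⟩
      rw [hQ.2.1] at this
      exact this
  intro Q hQ Q' hQ' hne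
  rw [Function.onFun]
  rw [Set.disjoint_left]
  intro x hx hx'
  apply hne
  obtain ⟨j, hd⟩ := hQ.1
  obtain ⟨j', hd'⟩ := hQ'.1
  rcases le_total j j' with h | h
  · exact key Q Q' hQ hQ' j j' hd hd' h ⟨x, hx, hx'⟩
  · exact (key Q' Q hQ' hQ j' j hd' hd h ⟨x, hx', hx⟩).symm

end Stmt6Aux3

section Stmt6Aux4
variable {n : ℕ}

noncomputable def cubeAt (Q₀ : Cube n) (x : Fin n → ℝ) (j : ℕ) : Cube n :=
  ⟨fun i => Q₀.a i + (⌊(x i - Q₀.a i) * 2 ^ j / Q₀.l⌋₊ : ℝ) * Q₀.l / 2 ^ j,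
    Q₀.l / 2 ^ j, by have := Q₀.l_pos; positivity⟩

lemma cubeAt_dyadic {Q₀ : Cube n} {x : Fin n → ℝ} (hx : x ∈ Q₀.carrier) (j : ℕ) :
    IsDyadic Q₀ (cubeAt Q₀ x j) j := by
  refine ⟨rfl, fun i => ⌊(x i - Q₀.a i) * 2 ^ j / Q₀.l⌋₊, fun i => ?_, fun i => rfl⟩
  have hl0 := Q₀.l_pos
  have h1 := (hx i).1
  have h2 := (hx i).2
  rw [Nat.floor_lt (div_nonneg (mul_nonneg (by linarith) (by positivity)) hl0.le)]
  rw [div_lt_iff₀ hl0]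
  push_cast
  nlinarith [pow_pos (by norm_num : (0:ℝ) < 2) j]

lemma mem_cubeAt {Q₀ : Cube n} {x : Fin n → ℝ} (hx : x ∈ Q₀.carrier) (j : ℕ) :
    x ∈ (cubeAt Q₀ x j).carrier := by
  intro i
  have hl0 := Q₀.l_pos
  have h2j : (0:ℝ) < 2 ^ j := by positivity
  have h1 := (hx i).1
  set y : ℝ := (x i - Q₀.a i) * 2 ^ j / Q₀.l with hy
  have hy0 : 0 ≤ y := div_nonneg (mul_nonneg (by linarith) (by positivity)) hl0.le
  have hfl : (⌊y⌋₊ : ℝ) ≤ y := Nat.floor_le hy0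
  have hfl2 : y < ⌊y⌋₊ + 1 := Nat.lt_floor_add_one y
  have hxi : x i = Q₀.a i + y * Q₀.l / 2 ^ j := by
    rw [hy]; field_simp; ring
  constructor
  · show Q₀.a i + (⌊y⌋₊ : ℝ) * Q₀.l / 2 ^ j ≤ x i
    rw [hxi]
    have : (⌊y⌋₊ : ℝ) * Q₀.l / 2 ^ j ≤ y * Q₀.l / 2 ^ j := by
      gcongr
    linarith
  · show x i < Q₀.a i + (⌊y⌋₊ : ℝ) * Q₀.l / 2 ^ j + Q₀.l / 2 ^ j
    rw [hxi]
    have : y * Q₀.l / 2 ^ j < ((⌊y⌋₊ : ℝ) + 1) * Q₀.l / 2 ^ j := by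
      gcongr
    have e : ((⌊y⌋₊ : ℝ) + 1) * Q₀.l / 2 ^ j = (⌊y⌋₊ : ℝ) * Q₀.l / 2 ^ j + Q₀.l / 2 ^ j := by ring
    linarith [e ▸ this]

lemma cubeAt_zero {Q₀ : Cube n} {x : Fin n → ℝ} (hx : x ∈ Q₀.carrier) :
    cubeAt Q₀ x 0 = Q₀ := by
  apply cube_ext
  · funext i
    have hl0 := Q₀.l_pos
    have h1 := (hx i).1
    have h2 := (hx i).2
    have : ⌊(x i - Q₀.a i) * 2 ^ (0:ℕ) / Q₀.l⌋₊ = 0 := by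
      apply Nat.floor_eq_zero.2
      rw [pow_zero, mul_one, div_lt_iff₀ hl0]
      linarith
    show Q₀.a i + (⌊(x i - Q₀.a i) * 2 ^ (0:ℕ) / Q₀.l⌋₊ : ℝ) * Q₀.l / 2 ^ (0:ℕ) = Q₀.a i
    rw [this]
    norm_num
  · show Q₀.l / 2 ^ (0:ℕ) = Q₀.l
    norm_num

lemma DE_covering {E : Set (Fin n → ℝ)} (hE : IsClosed E) (hne : E.Nonempty)
    {Q₀ : Cube n} (hQ₀ : (Q₀.carrier ∩ E).Nonempty) :
    (⋃ Q ∈ DE E Q₀, Cube.carrier Q) = Q₀.carrier \ E := by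
  apply Set.Subset.antisymm
  · intro x hx
    simp only [Set.mem_iUnion] at hx
    obtain ⟨Q, hQ, hxQ⟩ := hx
    obtain ⟨j, hd⟩ := hQ.1
    refine ⟨dyadic_sub hd hxQ, fun hxE => ?_⟩
    have : x ∈ Q.carrier ∩ E := ⟨hxQ, hxE⟩
    rw [hQ.2.1] at this
    exact this
  · rintro x ⟨hxQ₀, hxE⟩
    have hl0 := Q₀.l_pos
    have hdist : 0 < Metric.infDist x E := (hE.notMem_iff_infDist_pos hne).1 hxE
    -- find j with small cube avoiding E
    obtain ⟨j₁, hj₁⟩ := pow_unbounded_of_one_lt (Q₀.l / Metric.infDist x E) (by norm_num : (1:ℝ) < 2)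
    have hsmall : Q₀.l / 2 ^ j₁ < Metric.infDist x E := by
      rw [div_lt_iff₀ (by positivity)]
      rw [div_lt_iff₀ hdist] at hj₁
      nlinarith
    have hfree : (cubeAt Q₀ x j₁).carrier ∩ E = ∅ := by
      rw [Set.eq_empty_iff_forall_notMem]
      rintro z ⟨hz1, hz2⟩
      have hxc := mem_cubeAt hxQ₀ j₁
      have hd : dist x z ≤ Q₀.l / 2 ^ j₁ := by
        rw [dist_pi_le_iff (by positivity)]
        intro i
        rw [Real.dist_eq, abs_le]
        have hlc : (cubeAt Q₀ x j₁).l = Q₀.l / 2 ^ j₁ := rfl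
        have a1 := (hxc i).1; have a2 := (hxc i).2
        have b1 := (hz1 i).1; have b2 := (hz1 i).2
        rw [hlc] at a2 b2
        constructor <;> linarith
      have := Metric.infDist_le_dist_of_mem (x := x) hz2
      linarith
    have hex : ∃ j, (cubeAt Q₀ x j).carrier ∩ E = ∅ := ⟨j₁, hfree⟩
    classical
    have hjs : (cubeAt Q₀ x (Nat.find hex)).carrier ∩ E = ∅ := Nat.find_spec hex
    have hj0 : Nat.find hex ≠ 0 := by
      intro h0
      rw [h0, cubeAt_zero hxQ₀] at hjs
      rw [Set.eq_empty_iff_forall_notMem] at hjs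
      obtain ⟨z, hz⟩ := hQ₀
      exact hjs z hz
    obtain ⟨m, hm⟩ : ∃ m, Nat.find hex = m + 1 := ⟨Nat.find hex - 1, by omega⟩
    have hmem : cubeAt Q₀ x (Nat.find hex) ∈ DE E Q₀ := by
      refine ⟨⟨Nat.find hex, cubeAt_dyadic hxQ₀ _⟩, hjs, ?_⟩
      rintro P ⟨jp, hdq, hdp, hsub⟩
      have hgen : jp + 1 = Nat.find hex := gen_eq hdq (cubeAt_dyadic hxQ₀ _)
      have hjpm : jp = m := by omega
      rw [hjpm] at hdp
      have hPeq : P = cubeAt Q₀ x m := by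
        apply dyadic_same_gen_eq hdp (cubeAt_dyadic hxQ₀ m)
        exact ⟨x, hsub (mem_cubeAt hxQ₀ _), mem_cubeAt hxQ₀ m⟩
      rw [hPeq]
      rw [Set.nonempty_iff_ne_empty]
      exact Nat.find_min hex (by omega)
    exact Set.mem_biUnion hmem (mem_cubeAt hxQ₀ _)

end Stmt6Aux4

section Stmt6Aux5
variable {n : ℕ}

lemma DE_countable (E : Set (Fin n → ℝ)) (Q₀ : Cube n) : (DE E Q₀).Countable := by
  have hl0 := Q₀.l_pos
  have hsub : DE E Q₀ ⊆ Set.range (fun p : ℕ × (Fin n → ℕ) =>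
      (⟨fun i => Q₀.a i + (p.2 i : ℝ) * Q₀.l / 2 ^ p.1, Q₀.l / 2 ^ p.1, by positivity⟩ : Cube n)) := by
    rintro Q ⟨⟨j, hl, k, hk, ha⟩, -, -⟩
    refine ⟨(j, k), ?_⟩
    exact (cube_ext (funext fun i => (ha i).symm) hl.symm)
  exact (Set.countable_range _).mono hsub

lemma carrier_measurable (Q : Cube n) : MeasurableSet Q.carrier := by
  have : Q.carrier = Set.pi Set.univ (fun i => Set.Ico (Q.a i) (Q.a i + Q.l)) := by
    ext x; simp [Cube.carrier, Set.mem_pi]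
  rw [this]
  exact MeasurableSet.univ_pi fun i => measurableSet_Ico

lemma volume_carrier (Q : Cube n) : volume Q.carrier = ENNReal.ofReal Q.vol := by
  have : Q.carrier = Set.pi Set.univ (fun i => Set.Ico (Q.a i) (Q.a i + Q.l)) := by
    ext x; simp [Cube.carrier, Set.mem_pi]
  rw [this, volume_pi_pi]
  simp only [Real.volume_Ico, add_sub_cancel_left]
  rw [Finset.prod_const, Cube.vol, ← ENNReal.ofReal_pow Q.l_pos.le]
  simp

lemma tsum_set_mono (f : Cube n → ENNReal) {A B : Set (Cube n)} (h : A ⊆ B) :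
    ∑' a : A, f a ≤ ∑' b : B, f b := by
  rw [tsum_subtype, tsum_subtype]
  exact ENNReal.tsum_le_tsum
    (Set.indicator_le_indicator_of_subset h (fun _ => zero_le))

lemma DE_total_sum {E : Set (Fin n → ℝ)} (hE : IsClosed E) (hne : E.Nonempty)
    (hE0 : volume E = 0) {Q₀ : Cube n} (hQ₀ : (Q₀.carrier ∩ E).Nonempty) :
    ∑' Q : (DE E Q₀), ENNReal.ofReal (Q : Cube n).vol = ENNReal.ofReal Q₀.vol := by
  have h1 : volume (⋃ Q ∈ DE E Q₀, Cube.carrier Q) =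
      ∑' Q : (DE E Q₀), volume (Cube.carrier (Q : Cube n)) :=
    measure_biUnion (DE_countable E Q₀) DE_pairwiseDisjoint (fun Q _ => carrier_measurable Q)
  rw [DE_covering hE hne hQ₀, measure_diff_null hE0, volume_carrier] at h1
  rw [h1]
  exact tsum_congr fun Q => (volume_carrier _).symm

end Stmt6Aux5


/-- For `t ∈ (0,1)`, the set `𝓢(t,Q₀,E)` is a half-closed interval `[L'_t, ∞)` with
`0 < L'_t ≤ l(𝓜(Q₀))`, and `L'_t = 2^{-k₀} l(𝓜(Q₀))` for some `k₀ ≥ 0`. -/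
theorem stmt6 {n : ℕ} (E : Set (Fin n → ℝ)) (hE : IsClosed E) (hne : E.Nonempty)
    (hE0 : volume E = 0) (Q₀ : Cube n) (hQ₀ : (Q₀.carrier ∩ E).Nonempty)
    (t : ℝ) (ht : t ∈ Set.Ioo (0 : ℝ) 1)
    (M : Cube n) (hM : M ∈ DE E Q₀) (hMmax : ∀ Q ∈ DE E Q₀, Q.l ≤ M.l) :
    ∃ Lt' : ℝ, 0 < Lt' ∧ Lt' ≤ M.l ∧ Sset t Q₀ E = Set.Ici Lt' ∧
      ∃ k₀ : ℕ, Lt' = M.l / 2 ^ k₀ := by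
  classical
  obtain ⟨ht0, ht1⟩ := ht
  have hl0 := Q₀.l_pos
  have hMl0 := M.l_pos
  have hv0 : 0 < Q₀.vol := pow_pos hl0 n
  set f : Cube n → ENNReal := fun Q => ENNReal.ofReal Q.vol with hf
  set A : ℝ → Set (Cube n) := fun L => {Q | Q ∈ DE E Q₀ ∧ Q.l ≤ L} with hA
  set T : ℝ → ENNReal := fun L => ∑' Q : A L, f Q with hT
  set V : ENNReal := ENNReal.ofReal Q₀.vol with hV
  set τ : ENNReal := ENNReal.ofReal (t * Q₀.vol) with hτ
  have htot : ∑' Q : (DE E Q₀), f Q = V := DE_total_sum hE hne hE0 hQ₀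
  have hAD : ∀ L, A L ⊆ DE E Q₀ := fun L Q hQ => hQ.1
  have hTleV : ∀ L, T L ≤ V := fun L => le_trans (tsum_set_mono f (hAD L)) (le_of_eq htot)
  have hVne : V ≠ ⊤ := ENNReal.ofReal_ne_top
  have hTne : ∀ L, T L ≠ ⊤ := fun L => ne_top_of_le_ne_top hVne (hTleV L)
  have hTmono : ∀ {L L' : ℝ}, L ≤ L' → T L ≤ T L' := fun h =>
    tsum_set_mono f (fun Q hQ => ⟨hQ.1, le_trans hQ.2 h⟩)
  have hsum : ∀ L, sumLE E Q₀ L = (T L).toReal := by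
    intro L
    rw [hT]
    simp only []
    rw [ENNReal.tsum_toReal_eq (fun _ => ENNReal.ofReal_ne_top)]
    unfold sumLE
    exact tsum_congr fun Q => (ENNReal.toReal_ofReal (pow_nonneg (Q : Cube n).l_pos.le n)).symm
  have hmem : ∀ L, L ∈ Sset t Q₀ E ↔ (0 ≤ L ∧ τ ≤ T L) := by
    intro L
    unfold Sset
    rw [Set.mem_setOf_eq, hsum L, hτ, ENNReal.ofReal_le_iff_le_toReal (hTne L)]
  have hτpos : 0 < τ := ENNReal.ofReal_pos.2 (by positivity)
  -- tail estimate
  have hgtot : ∑' Q : Cube n, (DE E Q₀).indicator f Q = V := by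
    rw [← tsum_subtype]; exact htot
  have htends := ENNReal.tendsto_tsum_compl_atTop_zero (f := (DE E Q₀).indicator f)
    (by rw [hgtot]; exact hVne)
  obtain ⟨F, hF⟩ := (htends.eventually_lt_const hτpos).exists
  obtain ⟨ε, hε0, hεF⟩ : ∃ ε > 0, ∀ Q ∈ F, ε ≤ Q.l := by
    rcases F.eq_empty_or_nonempty with rfl | hFne
    · exact ⟨1, one_pos, by simp⟩
    · exact ⟨F.inf' hFne Cube.l, (Finset.lt_inf'_iff hFne).2 fun Q _ => Q.l_pos,
        fun Q hQ => Finset.inf'_le _ hQ⟩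
  obtain ⟨k₂, hk₂⟩ : ∃ k₂ : ℕ, M.l / 2 ^ k₂ < ε := by
    obtain ⟨k₂, hk₂⟩ := pow_unbounded_of_one_lt (M.l / ε) (by norm_num : (1:ℝ) < 2)
    refine ⟨k₂, ?_⟩
    rw [div_lt_iff₀ (by positivity)]
    rw [div_lt_iff₀ hε0] at hk₂
    nlinarith
  have hTsmall : T (M.l / 2 ^ k₂) < τ := by
    have hsub2 : A (M.l / 2 ^ k₂) ⊆ {Q | Q ∉ F} := by
      intro Q hQ hQF
      exact absurd (le_trans (hεF Q hQF) hQ.2) (not_le.2 hk₂)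
    calc T (M.l / 2 ^ k₂)
        = ∑' Q : A (M.l / 2 ^ k₂), (DE E Q₀).indicator f Q := by
          exact tsum_congr fun Q => (Set.indicator_of_mem (hAD _ Q.2) f).symm
      _ ≤ ∑' Q : {Q : Cube n | Q ∉ F}, (DE E Q₀).indicator f Q :=
          tsum_set_mono _ hsub2
      _ < τ := hF
  -- K and its maximum
  have hAMl : A M.l = DE E Q₀ := Set.Subset.antisymm (hAD _) (fun Q hQ => ⟨hQ, hMmax Q hQ⟩)
  have hK0 : τ ≤ T (M.l / 2 ^ 0) := by
    have e : M.l / 2 ^ 0 = M.l := by norm_num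
    have : T (M.l / 2 ^ 0) = V := by
      rw [hT]; simp only []
      rw [e, hAMl]; exact htot
    rw [this, hτ, hV]
    exact ENNReal.ofReal_le_ofReal (by nlinarith)
  have hkex : ∃ k : ℕ, ¬ τ ≤ T (M.l / 2 ^ k) := ⟨k₂, not_le.2 hTsmall⟩
  have hk₁0 : Nat.find hkex ≠ 0 := fun h => (Nat.find_spec hkex) (by rw [h]; exact hK0)
  set k₀ : ℕ := Nat.find hkex - 1 with hk₀
  have hk₀K : τ ≤ T (M.l / 2 ^ k₀) := of_not_not (Nat.find_min hkex (by omega))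
  have hk₁spec : ¬ τ ≤ T (M.l / 2 ^ (k₀ + 1)) := by
    have : k₀ + 1 = Nat.find hkex := by omega
    rw [this]; exact Nat.find_spec hkex
  -- dyadic length gap
  obtain ⟨jM, hjM⟩ := hM.1
  have hMl : M.l = Q₀.l / 2 ^ jM := hjM.1
  have hdivcomb : ∀ k : ℕ, M.l / 2 ^ k = Q₀.l / 2 ^ (jM + k) := by
    intro k; rw [hMl, div_div, ← pow_add]
  have hlen : ∀ Q ∈ DE E Q₀, Q.l < M.l / 2 ^ k₀ → Q.l ≤ M.l / 2 ^ (k₀ + 1) := by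
    intro Q hQ hQL
    obtain ⟨j, hdj⟩ := hQ.1
    have hQl : Q.l = Q₀.l / 2 ^ j := hdj.1
    rw [hQl, hdivcomb k₀] at hQL
    rw [hQl, hdivcomb (k₀ + 1)]
    have hj : jM + k₀ < j := by
      by_contra hcon
      push_neg at hcon
      have h2 : (2:ℝ) ^ j ≤ 2 ^ (jM + k₀) := by
        apply pow_le_pow_right₀ (by norm_num : (1:ℝ) ≤ 2) hcon
      have : Q₀.l / 2 ^ (jM + k₀) ≤ Q₀.l / 2 ^ j := by
        apply div_le_div_of_nonneg_left hl0.le (by positivity) h2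
      linarith
    have h2 : (2:ℝ) ^ (jM + k₀ + 1) ≤ 2 ^ j := by
      apply pow_le_pow_right₀ (by norm_num : (1:ℝ) ≤ 2) (by omega)
    exact div_le_div_of_nonneg_left hl0.le (by positivity) h2
  -- conclusion
  refine ⟨M.l / 2 ^ k₀, by positivity, ?_, ?_, k₀, rfl⟩
  · apply div_le_self hMl0.le
    exact one_le_pow₀ (by norm_num)
  · ext L
    constructor
    · intro hL
      obtain ⟨hL0, hLs⟩ := (hmem L).1 hL
      show M.l / 2 ^ k₀ ≤ L
      by_contra hcon
      push_neg at hcon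
      have hsub3 : A L ⊆ A (M.l / 2 ^ (k₀ + 1)) := fun Q hQ =>
        ⟨hQ.1, hlen Q hQ.1 (lt_of_le_of_lt hQ.2 hcon)⟩
      exact hk₁spec (le_trans hLs (tsum_set_mono f hsub3))
    · intro hL
      have hL' : M.l / 2 ^ k₀ ≤ L := hL
      exact (hmem L).2 ⟨le_trans (by positivity) hL', le_trans hk₀K (hTmono hL')⟩
end
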